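/- Let p ≥ 2 be an integer and suppose χ > C_p. Then for every α ≥ 0 the functional F^p_{m,α} has no critical point in R^p; in particular (taking α = 0) F^p_m has no critical point in R^p. -/

import Mathlib

open scoped BigOperators
noncomputable section

/-- Internal (diffusion) part: sum of (X_{i+1} - X_i)^(1-m) over consecutive gaps. -/
def gapSum (m : ℝ) (p : ℕ) (X : EuclideanSpace ℝ (Fin p)) : ℝ :=
  ∑ i : Fin p, if h : (i : ℕ) + 1 < p then (X ⟨(i : ℕ) + 1, h⟩ - X i) ^ (1 - m) else 0

/-- Interaction part: sum of |X_i - X_j|^(1-m) over ordered pairs i ≠ j. -/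
def pairSum (m : ℝ) (p : ℕ) (X : EuclideanSpace ℝ (Fin p)) : ℝ :=
  ∑ i : Fin p, ∑ j : Fin p, if i ≠ j then |X i - X j| ^ (1 - m) else 0

/-- The discrete free energy F^p_m. -/
def FF (m χ : ℝ) (p : ℕ) (X : EuclideanSpace ℝ (Fin p)) : ℝ :=
  (m - 1)⁻¹ * gapSum m p X - (χ / (m - 1)) * pairSum m p X

/-- Membership in R^p: strictly increasing with zero mean. -/
def memR (p : ℕ) (X : EuclideanSpace ℝ (Fin p)) : Prop :=
  (StrictMono fun i => X i) ∧ ∑ i, X i = 0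

/-- The critical constant C_p, with 1/C_p the sup of the HLS ratio. -/
def Cp (m : ℝ) (p : ℕ) : ℝ :=
  (sSup {r : ℝ | ∃ X : EuclideanSpace ℝ (Fin p), memR p X ∧
    r = pairSum m p X / gapSum m p X})⁻¹

/-- The functional F^p_{m,α} with confining quadratic potential. -/
def FFa (m χ α : ℝ) (p : ℕ) (X : EuclideanSpace ℝ (Fin p)) : ℝ :=
  FF m χ p X + α / 2 * ‖X‖ ^ 2

/-- H^N_{m+1}(Y) = |∇F^N_m(Y)|² − ((m−1) F^N_m(Y))². -/
def Hfun (m χ : ℝ) (N : ℕ) (Y : EuclideanSpace ℝ (Fin N)) : ℝ :=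
  ‖gradient (FF m χ N) Y‖ ^ 2 - ((m - 1) * FF m χ N Y) ^ 2

/-- X : [0,T) → R^N is a solution of the gradient flow of F^N_m. -/
def isGFlow (m χ : ℝ) (N : ℕ) (T : ℝ) (X : ℝ → EuclideanSpace ℝ (Fin N)) : Prop :=
  ∀ t ∈ Set.Ico (0 : ℝ) T, memR N (X t) ∧
    HasDerivWithinAt X (-(gradient (FF m χ N) (X t))) (Set.Ico (0 : ℝ) T) t

/-- The gap Y_{i+1} - Y_i (0 if i+1 is out of range). -/
def gapAt (N : ℕ) (Y : EuclideanSpace ℝ (Fin N)) (i : ℕ) : ℝ :=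
  if h : i + 1 < N then Y ⟨i + 1, h⟩ - Y ⟨i, Nat.lt_of_succ_lt h⟩ else 0

namespace Stmt10Aux

/-! ### Generic sum lemmas -/

lemma radon {ι : Type*} (s : Finset ι) (hs : s.Nonempty) {m : ℝ} (hm : 1 < m)
    (a b : ι → ℝ) (ha : ∀ i ∈ s, 0 < a i) (hb : ∀ i ∈ s, 0 < b i) :
    (∑ i ∈ s, a i) ^ m * (∑ i ∈ s, b i) ^ (1 - m) ≤ ∑ i ∈ s, (b i) ^ (1 - m) * (a i) ^ m := by
  set A := ∑ i ∈ s, a i with hA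
  set B := ∑ i ∈ s, b i with hB
  have hApos : 0 < A := Finset.sum_pos ha hs
  have hBpos : 0 < B := Finset.sum_pos hb hs
  have key := Real.rpow_arith_mean_le_arith_mean_rpow s (fun i => b i / B)
      (fun i => a i / b i)
      (fun i hi => div_nonneg (hb i hi).le hBpos.le)
      (by rw [← Finset.sum_div, ← hB, div_self hBpos.ne'])
      (fun i hi => div_nonneg (ha i hi).le (hb i hi).le) hm.le
  have hL : ∑ i ∈ s, (b i / B) * (a i / b i) = A / B := by
    rw [hA, Finset.sum_div]
    refine Finset.sum_congr rfl fun i hi => ?_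
    rw [div_mul_div_comm, mul_comm B (b i), mul_div_mul_left _ _ (hb i hi).ne']
  have hR : ∑ i ∈ s, (b i / B) * (a i / b i) ^ m
      = (∑ i ∈ s, (b i) ^ (1 - m) * (a i) ^ m) / B := by
    rw [Finset.sum_div]
    refine Finset.sum_congr rfl fun i hi => ?_
    rw [Real.div_rpow (ha i hi).le (hb i hi).le, Real.rpow_sub (hb i hi), Real.rpow_one]
    ring
  rw [hL, hR] at key
  have key2 : A ^ m / B ^ m ≤ (∑ i ∈ s, (b i) ^ (1 - m) * (a i) ^ m) / B := by
    rwa [Real.div_rpow hApos.le hBpos.le] at key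
  calc A ^ m * B ^ (1 - m) = A ^ m / B ^ m * B := by
        rw [Real.rpow_sub hBpos, Real.rpow_one]; ring
    _ ≤ (∑ i ∈ s, (b i) ^ (1 - m) * (a i) ^ m) / B * B :=
        mul_le_mul_of_nonneg_right key2 hBpos.le
    _ = _ := div_mul_cancel₀ _ hBpos.ne'

lemma pair_sym {p : ℕ} (F : Fin p → Fin p → ℝ) (h : ∀ i j, F i j = F j i) :
    ∑ i : Fin p, ∑ j : Fin p, (if i ≠ j then F i j else 0)
      = 2 * ∑ i : Fin p, ∑ j : Fin p, (if j < i then F i j else 0) := by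
  have hsplit : ∀ i j : Fin p,
      (if i ≠ j then F i j else 0)
        = (if j < i then F i j else 0) + (if i < j then F i j else 0) := by
    intro i j
    rcases lt_trichotomy i j with hij | hij | hij
    · simp [hij, hij.ne, hij.ne', not_lt_of_gt hij]
    · simp [hij]
    · simp [hij, hij.ne, hij.ne', not_lt_of_gt hij]
  have h2 : ∑ i : Fin p, ∑ j : Fin p, (if i ≠ j then F i j else 0)
      = (∑ i : Fin p, ∑ j : Fin p, (if j < i then F i j else 0))
        + ∑ i : Fin p, ∑ j : Fin p, (if i < j then F i j else 0) := by
    rw [← Finset.sum_add_distrib]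
    refine Finset.sum_congr rfl fun i _ => ?_
    rw [← Finset.sum_add_distrib]
    exact Finset.sum_congr rfl fun j _ => hsplit i j
  have h3 : ∑ i : Fin p, ∑ j : Fin p, (if i < j then F i j else 0)
      = ∑ i : Fin p, ∑ j : Fin p, (if j < i then F i j else 0) := by
    rw [Finset.sum_comm]
    refine Finset.sum_congr rfl fun i _ => Finset.sum_congr rfl fun j _ => ?_
    rw [h i j]
  rw [h2, h3]; ring

lemma sum_range_eq {p : ℕ} (g : ℕ → ℝ) {k : ℕ} (hk : k ≤ p) :
    ∑ l ∈ Finset.range k, g l = ∑ l ∈ Finset.range p, (if l < k then g l else 0) := by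
  rw [← Finset.sum_filter]
  congr 1
  ext l
  simp only [Finset.mem_filter, Finset.mem_range]
  omega

lemma top_sum_nonneg {p : ℕ} (V : EuclideanSpace ℝ (Fin p))
    (hmono : StrictMono fun i : Fin p => V i) (hzero : ∑ i, V i = 0) (l : ℕ) :
    0 ≤ ∑ i : Fin p, (if l < (i : ℕ) then V i else 0) := by
  by_cases hl : l + 1 < p
  · by_cases ht : 0 ≤ V ⟨l + 1, hl⟩
    · refine Finset.sum_nonneg fun k _ => ?_
      split_ifs with h
      · exact le_trans ht (hmono.monotone (Fin.le_def.mpr (by simpa using h)))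
      · exact le_refl 0
    · push_neg at ht
      have hsplit : ∑ i : Fin p, (if l < (i:ℕ) then V i else 0)
          + ∑ i : Fin p, (if l < (i:ℕ) then 0 else V i) = 0 := by
        have : ∑ i : Fin p, ((if l < (i:ℕ) then V i else 0) + (if l < (i:ℕ) then 0 else V i))
            = ∑ i : Fin p, V i :=
          Finset.sum_congr rfl fun i _ => by split_ifs <;> simp
        rw [← Finset.sum_add_distrib, this, hzero]
      have hB : ∑ i : Fin p, (if l < (i:ℕ) then 0 else V i) ≤ 0 := by
        refine Finset.sum_nonpos fun k _ => ?_
        split_ifs with h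
        · exact le_refl 0
        · have hk : k < (⟨l+1, hl⟩ : Fin p) := Fin.lt_def.mpr (by simp; omega)
          have := hmono hk
          linarith
      linarith
  · have h0 : ∀ i : Fin p, ¬ l < (i:ℕ) := fun i => by have := i.isLt; omega
    simp [h0]

lemma telescope {p : ℕ} (V : EuclideanSpace ℝ (Fin p)) {i j : Fin p} (hji : j ≤ i) :
    ∑ l ∈ Finset.Ico (j:ℕ) (i:ℕ), gapAt p V l = V i - V j := by
  classical
  set f : ℕ → ℝ := fun l => if h : l < p then V ⟨l, h⟩ else 0 with hf
  have hterm : ∀ l ∈ Finset.Ico (j:ℕ) (i:ℕ), gapAt p V l = f (l+1) - f l := by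
    intro l hl
    simp only [Finset.mem_Ico] at hl
    have h1 : l + 1 < p := lt_of_le_of_lt (Nat.succ_le_of_lt hl.2) i.isLt
    rw [gapAt, dif_pos h1, hf]
    simp only
    rw [dif_pos h1, dif_pos (Nat.lt_of_succ_lt h1)]
  rw [Finset.sum_congr rfl hterm, Finset.sum_Ico_eq_sub _ (Fin.le_def.mp hji),
    Finset.sum_range_sub fun l => f l, Finset.sum_range_sub fun l => f l]
  have hfi : f (i:ℕ) = V i := by rw [hf]; simp [i.isLt]
  have hfj : f (j:ℕ) = V j := by rw [hf]; simp [j.isLt]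
  rw [hfi, hfj]; ring

lemma gapAt_pos {p : ℕ} {V : EuclideanSpace ℝ (Fin p)}
    (hmono : StrictMono fun i : Fin p => V i) {l : ℕ} (h : l + 1 < p) :
    0 < gapAt p V l := by
  rw [gapAt, dif_pos h]
  exact sub_pos.mpr (hmono (Fin.mk_lt_mk.mpr (Nat.lt_succ_self l)))

lemma gapAt_nonneg {p : ℕ} {V : EuclideanSpace ℝ (Fin p)}
    (hmono : StrictMono fun i : Fin p => V i) (l : ℕ) : 0 ≤ gapAt p V l := by
  by_cases h : l + 1 < p
  · exact (gapAt_pos hmono h).le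
  · rw [gapAt, dif_neg h]

/-! ### Derivatives -/

variable {p : ℕ}

lemma hasF_sub_rpow (c : ℝ) (V : EuclideanSpace ℝ (Fin p)) {i j : Fin p} (h : V j < V i) :
    HasFDerivAt (fun X : EuclideanSpace ℝ (Fin p) => (X i - X j) ^ c)
      ((c * (V i - V j) ^ (c - 1)) •
        (EuclideanSpace.proj i - EuclideanSpace.proj j :
          EuclideanSpace ℝ (Fin p) →L[ℝ] ℝ)) V := by
  have hsub : HasFDerivAt
      (fun X : EuclideanSpace ℝ (Fin p) =>
        EuclideanSpace.proj i X - EuclideanSpace.proj j X)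
      (EuclideanSpace.proj i - EuclideanSpace.proj j :
        EuclideanSpace ℝ (Fin p) →L[ℝ] ℝ) V :=
    (EuclideanSpace.proj (𝕜 := ℝ) i).hasFDerivAt.sub
      (EuclideanSpace.proj (𝕜 := ℝ) j).hasFDerivAt
  have hr := Real.hasDerivAt_rpow_const (x := V i - V j) (p := c)
    (Or.inl (sub_pos.mpr h).ne')
  exact hr.comp_hasFDerivAt V hsub

lemma hasF_abs (c : ℝ) (V : EuclideanSpace ℝ (Fin p)) {i j : Fin p} (hne : V i ≠ V j) :
    HasFDerivAt (fun X : EuclideanSpace ℝ (Fin p) => |X i - X j| ^ c)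
      ((c * |V i - V j| ^ (c - 1) * Real.sign (V i - V j)) •
        (EuclideanSpace.proj i - EuclideanSpace.proj j :
          EuclideanSpace ℝ (Fin p) →L[ℝ] ℝ)) V := by
  rcases hne.lt_or_gt with hlt | hgt
  · have hopen : IsOpen {X : EuclideanSpace ℝ (Fin p) | X i < X j} :=
      isOpen_lt (EuclideanSpace.proj i).continuous (EuclideanSpace.proj j).continuous
    have heq : (fun X : EuclideanSpace ℝ (Fin p) => |X i - X j| ^ c)
        =ᶠ[nhds V] (fun X => (X j - X i) ^ c) := by
      filter_upwards [hopen.mem_nhds hlt] with X hX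
      rw [abs_of_neg (sub_neg.mpr hX), neg_sub]
    have base := hasF_sub_rpow c V (i := j) (j := i) hlt
    have hc : ((c * |V i - V j| ^ (c - 1) * Real.sign (V i - V j)) •
        (EuclideanSpace.proj i - EuclideanSpace.proj j :
          EuclideanSpace ℝ (Fin p) →L[ℝ] ℝ))
        = (c * (V j - V i) ^ (c - 1)) •
          (EuclideanSpace.proj j - EuclideanSpace.proj i :
            EuclideanSpace ℝ (Fin p) →L[ℝ] ℝ) := by
      rw [Real.sign_of_neg (sub_neg.mpr hlt), abs_of_neg (sub_neg.mpr hlt), neg_sub,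
        mul_neg_one]
      module
    rw [hc]
    exact base.congr_of_eventuallyEq heq
  · have hopen : IsOpen {X : EuclideanSpace ℝ (Fin p) | X j < X i} :=
      isOpen_lt (EuclideanSpace.proj j).continuous (EuclideanSpace.proj i).continuous
    have heq : (fun X : EuclideanSpace ℝ (Fin p) => |X i - X j| ^ c)
        =ᶠ[nhds V] (fun X => (X i - X j) ^ c) := by
      filter_upwards [hopen.mem_nhds hgt] with X hX
      rw [abs_of_pos (sub_pos.mpr hX)]
    have base := hasF_sub_rpow c V (i := i) (j := j) hgt
    have hc : ((c * |V i - V j| ^ (c - 1) * Real.sign (V i - V j)) •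
        (EuclideanSpace.proj i - EuclideanSpace.proj j :
          EuclideanSpace ℝ (Fin p) →L[ℝ] ℝ))
        = (c * (V i - V j) ^ (c - 1)) •
          (EuclideanSpace.proj i - EuclideanSpace.proj j :
            EuclideanSpace ℝ (Fin p) →L[ℝ] ℝ) := by
      rw [Real.sign_of_pos (sub_pos.mpr hgt), abs_of_pos (sub_pos.mpr hgt), mul_one]
    rw [hc]
    exact base.congr_of_eventuallyEq heq

def L1 (m : ℝ) (p : ℕ) (V : EuclideanSpace ℝ (Fin p)) :
    EuclideanSpace ℝ (Fin p) →L[ℝ] ℝ :=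
  ∑ i : Fin p, if h : (i : ℕ) + 1 < p then
    ((1 - m) * (V ⟨(i : ℕ) + 1, h⟩ - V i) ^ (1 - m - 1)) •
      (EuclideanSpace.proj (⟨(i : ℕ) + 1, h⟩ : Fin p) - EuclideanSpace.proj i)
  else 0

def L2 (m : ℝ) (p : ℕ) (V : EuclideanSpace ℝ (Fin p)) :
    EuclideanSpace ℝ (Fin p) →L[ℝ] ℝ :=
  ∑ i : Fin p, ∑ j : Fin p, if i ≠ j then
    ((1 - m) * |V i - V j| ^ (1 - m - 1) * Real.sign (V i - V j)) •
      (EuclideanSpace.proj i - EuclideanSpace.proj j)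
  else 0

def L3 (p : ℕ) (V : EuclideanSpace ℝ (Fin p)) :
    EuclideanSpace ℝ (Fin p) →L[ℝ] ℝ :=
  ∑ i : Fin p, (V i • EuclideanSpace.proj i + V i • EuclideanSpace.proj i)

lemma hasF_FFa {m : ℝ} (χ α : ℝ) (V : EuclideanSpace ℝ (Fin p))
    (hmono : StrictMono fun i : Fin p => V i) :
    HasFDerivAt (FFa m χ α p)
      ((m - 1)⁻¹ • L1 m p V - (χ / (m - 1)) • L2 m p V + (α / 2) • L3 p V) V := by
  have hgap : HasFDerivAt (fun X => gapSum m p X) (L1 m p V) V := by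
    unfold gapSum L1
    refine HasFDerivAt.fun_sum fun i _ => ?_
    by_cases h : (i : ℕ) + 1 < p
    · simp only [dif_pos h]
      exact hasF_sub_rpow (1 - m) V
        (hmono (show i < (⟨(i : ℕ) + 1, h⟩ : Fin p) from Fin.lt_def.mpr (Nat.lt_succ_self _)))
    · simp only [dif_neg h]
      exact hasFDerivAt_const 0 V
  have hpair : HasFDerivAt (fun X => pairSum m p X) (L2 m p V) V := by
    unfold pairSum L2
    refine HasFDerivAt.fun_sum fun i _ => ?_
    refine HasFDerivAt.fun_sum fun j _ => ?_
    by_cases h : i ≠ j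
    · simp only [if_pos h]
      exact hasF_abs (1 - m) V (fun he => h (hmono.injective he))
    · simp only [if_neg h]
      exact hasFDerivAt_const 0 V
  have hnorm : (fun X : EuclideanSpace ℝ (Fin p) => α / 2 * ‖X‖ ^ 2)
      = fun X => α / 2 * ∑ i, X i * X i := by
    funext X
    rw [← real_inner_self_eq_norm_sq]
    congr 1
  have hsq : HasFDerivAt (fun X : EuclideanSpace ℝ (Fin p) => ∑ i, X i * X i) (L3 p V) V := by
    unfold L3
    refine HasFDerivAt.fun_sum fun i _ => ?_
    exact (EuclideanSpace.proj (𝕜 := ℝ) i).hasFDerivAt.mul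
      (EuclideanSpace.proj (𝕜 := ℝ) i).hasFDerivAt
  have hq : HasFDerivAt (fun X : EuclideanSpace ℝ (Fin p) => α / 2 * ‖X‖ ^ 2)
      ((α / 2) • L3 p V) V := by
    rw [hnorm]
    exact hsq.const_mul (α / 2)
  have hFF : HasFDerivAt (fun X => FF m χ p X)
      ((m - 1)⁻¹ • L1 m p V - (χ / (m - 1)) • L2 m p V) V :=
    (hgap.const_mul ((m - 1)⁻¹)).sub (hpair.const_mul (χ / (m - 1)))
  exact hFF.add hq


set_option maxHeartbeats 1000000 in
lemma key {m χ α : ℝ} (hm : 1 < m) (hχ : 0 < χ) (hα : 0 ≤ α) {p : ℕ}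
    {V : EuclideanSpace ℝ (Fin p)} (hV : memR p V)
    (hgrad : gradient (FFa m χ α p) V = 0)
    {X : EuclideanSpace ℝ (Fin p)} (hX : memR p X) :
    χ * pairSum m p X ≤ gapSum m p X := by
  obtain ⟨hVmono, hVsum⟩ := hV
  obtain ⟨hXmono, hXsum⟩ := hX
  have proj_app : ∀ (k : Fin p) (Y : EuclideanSpace ℝ (Fin p)),
      EuclideanSpace.proj (𝕜 := ℝ) k Y = Y k := fun _ _ => rfl
  have hL := hasF_FFa (m := m) χ α V hVmono
  have hfz : fderiv ℝ (FFa m χ α p) V = 0 := by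
    unfold gradient at hgrad
    rwa [LinearIsometryEquiv.map_eq_zero_iff] at hgrad
  have hL0 : (m - 1)⁻¹ • L1 m p V - (χ / (m - 1)) • L2 m p V + (α / 2) • L3 p V = 0 := by
    rw [← hL.fderiv, hfz]
  set w : ℕ → ℝ := fun l => gapAt p X l ^ (1 - m) * gapAt p V l ^ m with hw
  set W : EuclideanSpace ℝ (Fin p) := WithLp.toLp 2 (fun k : Fin p => ∑ l ∈ Finset.range (k : ℕ), w l)
    with hWdef
  have hWap : ∀ k : Fin p, W k = ∑ l ∈ Finset.range (k : ℕ), w l := fun k => rfl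
  have hzero : (m - 1)⁻¹ * (L1 m p V W) - (χ / (m - 1)) * (L2 m p V W)
      + (α / 2) * (L3 p V W) = 0 := by
    have h := congrArg (fun (f : EuclideanSpace ℝ (Fin p) →L[ℝ] ℝ) => f W) hL0
    simpa only [ContinuousLinearMap.add_apply, ContinuousLinearMap.sub_apply,
      ContinuousLinearMap.smul_apply, smul_eq_mul, ContinuousLinearMap.zero_apply] using h
  -- L1 applied to W
  have hL1W : L1 m p V W = (1 - m) * gapSum m p X := by
    unfold L1 gapSum
    rw [ContinuousLinearMap.sum_apply, Finset.mul_sum]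
    refine Finset.sum_congr rfl fun i _ => ?_
    by_cases h : (i : ℕ) + 1 < p
    · rw [dif_pos h, dif_pos h]
      rw [ContinuousLinearMap.smul_apply, ContinuousLinearMap.sub_apply, proj_app, proj_app,
        smul_eq_mul]
      have hVd : 0 < V ⟨(i : ℕ) + 1, h⟩ - V i :=
        sub_pos.mpr (hVmono (show i < (⟨(i : ℕ) + 1, h⟩ : Fin p) from
          Fin.lt_def.mpr (Nat.lt_succ_self _)))
      have hWd : W ⟨(i : ℕ) + 1, h⟩ - W i = w (i : ℕ) := by
        rw [hWap, hWap]
        simp [Finset.sum_range_succ]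
      rw [hWd, hw]
      simp only
      have hgV : gapAt p V (i : ℕ) = V ⟨(i : ℕ) + 1, h⟩ - V i := by
        rw [gapAt, dif_pos h, Fin.eta]
      have hgX : gapAt p X (i : ℕ) = X ⟨(i : ℕ) + 1, h⟩ - X i := by
        rw [gapAt, dif_pos h, Fin.eta]
      rw [hgV, hgX]
      have hcancel : (V ⟨(i : ℕ) + 1, h⟩ - V i) ^ (1 - m - 1)
          * (V ⟨(i : ℕ) + 1, h⟩ - V i) ^ m = 1 := by
        rw [← Real.rpow_add hVd]
        norm_num
      calc (1 - m) * (V ⟨(i : ℕ) + 1, h⟩ - V i) ^ (1 - m - 1)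
            * ((X ⟨(i : ℕ) + 1, h⟩ - X i) ^ (1 - m) * (V ⟨(i : ℕ) + 1, h⟩ - V i) ^ m)
          = (1 - m) * ((X ⟨(i : ℕ) + 1, h⟩ - X i) ^ (1 - m))
            * ((V ⟨(i : ℕ) + 1, h⟩ - V i) ^ (1 - m - 1)
              * (V ⟨(i : ℕ) + 1, h⟩ - V i) ^ m) := by ring
        _ = (1 - m) * (X ⟨(i : ℕ) + 1, h⟩ - X i) ^ (1 - m) := by rw [hcancel]; ring
    · rw [dif_neg h, dif_neg h]
      simp
  -- L3 applied to W
  have hL3W : L3 p V W = 2 * ∑ i : Fin p, V i * W i := by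
    unfold L3
    rw [ContinuousLinearMap.sum_apply, Finset.mul_sum]
    refine Finset.sum_congr rfl fun i _ => ?_
    simp only [ContinuousLinearMap.add_apply, ContinuousLinearMap.smul_apply, proj_app,
      smul_eq_mul]
    ring
  -- L2 applied to W
  have hL2W : L2 m p V W = (1 - m) * (2 * ∑ i : Fin p, ∑ j : Fin p,
      (if j < i then (V i - V j) ^ (1 - m - 1) * (W i - W j) else 0)) := by
    unfold L2
    rw [ContinuousLinearMap.sum_apply]
    have step1 : (∑ i : Fin p, (∑ j : Fin p, if i ≠ j then
          ((1 - m) * |V i - V j| ^ (1 - m - 1) * Real.sign (V i - V j)) •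
            (EuclideanSpace.proj i - EuclideanSpace.proj j :
              EuclideanSpace ℝ (Fin p) →L[ℝ] ℝ) else 0) W)
        = ∑ i : Fin p, ∑ j : Fin p, (if i ≠ j then
            (1 - m) * |V i - V j| ^ (1 - m - 1) * Real.sign (V i - V j) * (W i - W j)
          else 0) := by
      refine Finset.sum_congr rfl fun i _ => ?_
      rw [ContinuousLinearMap.sum_apply]
      refine Finset.sum_congr rfl fun j _ => ?_
      split_ifs with h
      · rw [ContinuousLinearMap.smul_apply, ContinuousLinearMap.sub_apply, proj_app, proj_app,
          smul_eq_mul]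
      · exact ContinuousLinearMap.zero_apply W
    rw [step1]
    rw [pair_sym (fun i j =>
        (1 - m) * |V i - V j| ^ (1 - m - 1) * Real.sign (V i - V j) * (W i - W j))
      (by
        intro i j
        dsimp only
        rw [abs_sub_comm (V j) (V i), show V j - V i = -(V i - V j) from by ring,
          Real.sign_neg, show W j - W i = -(W i - W j) from by ring]
        ring)]
    have inner_eq : (∑ i : Fin p, ∑ j : Fin p, (if j < i then
          (1 - m) * |V i - V j| ^ (1 - m - 1) * Real.sign (V i - V j) * (W i - W j) else 0))
        = (1 - m) * ∑ i : Fin p, ∑ j : Fin p,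
            (if j < i then (V i - V j) ^ (1 - m - 1) * (W i - W j) else 0) := by
      rw [Finset.mul_sum]
      refine Finset.sum_congr rfl fun i _ => ?_
      rw [Finset.mul_sum]
      refine Finset.sum_congr rfl fun j _ => ?_
      split_ifs with h
      · have hVd : 0 < V i - V j := sub_pos.mpr (hVmono h)
        rw [Real.sign_of_pos hVd, abs_of_pos hVd]
        ring
      · ring
    rw [inner_eq]
    ring
  -- put everything together
  rw [hL1W, hL2W, hL3W] at hzero
  set T := ∑ i : Fin p, ∑ j : Fin p,
      (if j < i then (V i - V j) ^ (1 - m - 1) * (W i - W j) else 0) with hTdef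
  set Q := ∑ i : Fin p, V i * W i with hQdef
  have hm1 : m - 1 ≠ 0 := sub_ne_zero.mpr (ne_of_gt hm)
  have e1 : (m - 1)⁻¹ * ((1 - m) * gapSum m p X) = -gapSum m p X := by
    field_simp
    ring
  have e2 : χ / (m - 1) * ((1 - m) * (2 * T)) = -(2 * χ * T) := by
    field_simp
    ring
  have e3 : α / 2 * (2 * Q) = α * Q := by ring
  rw [e1, e2, e3] at hzero
  have hiden : gapSum m p X = 2 * χ * T + α * Q := by linarith
  have hQ : 0 ≤ Q := by
    rw [hQdef]
    rw [show (∑ i : Fin p, V i * W i)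
        = ∑ i : Fin p, ∑ l ∈ Finset.range p, (if l < (i : ℕ) then V i * w l else 0) from
      Finset.sum_congr rfl fun i _ => by
        rw [hWap i, Finset.mul_sum, sum_range_eq (fun l => V i * w l) (le_of_lt i.isLt)]]
    rw [Finset.sum_comm]
    refine Finset.sum_nonneg fun l _ => ?_
    rw [show (∑ i : Fin p, (if l < (i : ℕ) then V i * w l else 0))
        = w l * ∑ i : Fin p, (if l < (i : ℕ) then V i else 0) from by
      rw [Finset.mul_sum]
      exact Finset.sum_congr rfl fun i _ => by split_ifs <;> ring]
    have hwnn : 0 ≤ w l := mul_nonneg (Real.rpow_nonneg (gapAt_nonneg hXmono l) _)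
      (Real.rpow_nonneg (gapAt_nonneg hVmono l) _)
    exact mul_nonneg hwnn (top_sum_nonneg V hVmono hVsum l)
  have hPair : pairSum m p X = 2 * ∑ i : Fin p, ∑ j : Fin p,
      (if j < i then (X i - X j) ^ (1 - m) else 0) := by
    unfold pairSum
    rw [pair_sym (fun i j => |X i - X j| ^ (1 - m))
      (fun i j => by dsimp only; rw [abs_sub_comm (X i) (X j)])]
    congr 1
    refine Finset.sum_congr rfl fun i _ => Finset.sum_congr rfl fun j _ => ?_
    split_ifs with h
    · rw [abs_of_pos (sub_pos.mpr (hXmono h))]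
    · rfl
  have hTge : (∑ i : Fin p, ∑ j : Fin p, (if j < i then (X i - X j) ^ (1 - m) else 0)) ≤ T := by
    rw [hTdef]
    refine Finset.sum_le_sum fun i _ => Finset.sum_le_sum fun j _ => ?_
    split_ifs with h
    · have hji : (j : ℕ) < (i : ℕ) := h
      have hVd : 0 < V i - V j := sub_pos.mpr (hVmono h)
      have hXd : 0 < X i - X j := sub_pos.mpr (hXmono h)
      have hWij : W i - W j = ∑ l ∈ Finset.Ico (j : ℕ) (i : ℕ), w l := by
        rw [hWap, hWap, Finset.sum_Ico_eq_sub _ (le_of_lt hji)]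
      have hne : (Finset.Ico (j : ℕ) (i : ℕ)).Nonempty :=
        ⟨(j : ℕ), Finset.mem_Ico.mpr ⟨le_refl _, hji⟩⟩
      have hposV : ∀ l ∈ Finset.Ico (j : ℕ) (i : ℕ), 0 < gapAt p V l := by
        intro l hl
        simp only [Finset.mem_Ico] at hl
        exact gapAt_pos hVmono (lt_of_le_of_lt (Nat.succ_le_of_lt hl.2) i.isLt)
      have hposX : ∀ l ∈ Finset.Ico (j : ℕ) (i : ℕ), 0 < gapAt p X l := by
        intro l hl
        simp only [Finset.mem_Ico] at hl
        exact gapAt_pos hXmono (lt_of_le_of_lt (Nat.succ_le_of_lt hl.2) i.isLt)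
      have hr := radon _ hne hm (fun l => gapAt p V l) (fun l => gapAt p X l) hposV hposX
      rw [telescope V h.le, telescope X h.le] at hr
      have hsum : (∑ l ∈ Finset.Ico (j : ℕ) (i : ℕ), gapAt p X l ^ (1 - m) * gapAt p V l ^ m)
          = ∑ l ∈ Finset.Ico (j : ℕ) (i : ℕ), w l := rfl
      rw [hsum] at hr
      have hzexp : (1 - m - 1) + m = 0 := by ring
      rw [hWij]
      calc (X i - X j) ^ (1 - m)
          = (V i - V j) ^ (1 - m - 1) * ((V i - V j) ^ m * (X i - X j) ^ (1 - m)) := by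
            rw [← mul_assoc, ← Real.rpow_add hVd, hzexp, Real.rpow_zero, one_mul]
        _ ≤ (V i - V j) ^ (1 - m - 1) * ∑ l ∈ Finset.Ico (j : ℕ) (i : ℕ), w l :=
            mul_le_mul_of_nonneg_left hr (Real.rpow_nonneg hVd.le _)
    · exact le_refl 0
  have h2χ : (0:ℝ) ≤ 2 * χ := by linarith
  calc χ * pairSum m p X
      = 2 * χ * (∑ i : Fin p, ∑ j : Fin p, (if j < i then (X i - X j) ^ (1 - m) else 0)) := by
        rw [hPair]; ring
    _ ≤ 2 * χ * T := mul_le_mul_of_nonneg_left hTge h2χ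
    _ ≤ gapSum m p X := by nlinarith [mul_nonneg hα hQ]


lemma gapSum_pos {m : ℝ} {p : ℕ} (hp : 2 ≤ p) {X : EuclideanSpace ℝ (Fin p)}
    (hmono : StrictMono fun i : Fin p => X i) : 0 < gapSum m p X := by
  unfold gapSum
  refine Finset.sum_pos' (fun i _ => ?_) ⟨⟨0, by omega⟩, Finset.mem_univ _, ?_⟩
  · by_cases h : (i : ℕ) + 1 < p
    · rw [dif_pos h]
      exact Real.rpow_nonneg (sub_pos.mpr (hmono (show i < (⟨(i : ℕ) + 1, h⟩ : Fin p) from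
        Fin.lt_def.mpr (Nat.lt_succ_self _)))).le _
    · rw [dif_neg h]
  · have h01 : ((⟨0, by omega⟩ : Fin p) : ℕ) + 1 < p := by simpa using by omega
    rw [dif_pos h01]
    exact Real.rpow_pos_of_pos (sub_pos.mpr (hmono (Fin.mk_lt_mk.mpr (by omega)))) _

lemma pairSum_pos {m : ℝ} {p : ℕ} (hp : 2 ≤ p) {X : EuclideanSpace ℝ (Fin p)}
    (hmono : StrictMono fun i : Fin p => X i) : 0 < pairSum m p X := by
  unfold pairSum
  have hnn : ∀ (i j : Fin p), 0 ≤ (if i ≠ j then |X i - X j| ^ (1 - m) else 0) := by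
    intro i j
    split_ifs
    · exact Real.rpow_nonneg (abs_nonneg _) _
    · exact le_refl 0
  refine Finset.sum_pos' (fun i _ => Finset.sum_nonneg fun j _ => hnn i j)
    ⟨⟨1, by omega⟩, Finset.mem_univ _, ?_⟩
  refine Finset.sum_pos' (fun j _ => hnn _ j) ⟨⟨0, by omega⟩, Finset.mem_univ _, ?_⟩
  have hne : (⟨1, by omega⟩ : Fin p) ≠ ⟨0, by omega⟩ := by
    simp [Fin.ext_iff]
  rw [if_pos hne]
  have hlt : X ⟨0, by omega⟩ < X ⟨1, by omega⟩ := hmono (Fin.mk_lt_mk.mpr (by omega))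
  exact Real.rpow_pos_of_pos (abs_pos.mpr (sub_ne_zero.mpr (ne_of_gt hlt))) _

end Stmt10Aux

theorem stmt10 (m χ : ℝ) (hm : 1 < m) (hχ : 0 < χ) (p : ℕ) (hp : 2 ≤ p)
    (hgt : Cp m p < χ) :
    (∀ α : ℝ, 0 ≤ α →
      ¬ ∃ V : EuclideanSpace ℝ (Fin p), memR p V ∧ gradient (FFa m χ α p) V = 0) ∧
    ¬ ∃ V : EuclideanSpace ℝ (Fin p), memR p V ∧ gradient (FF m χ p) V = 0 := by
  have main : ∀ α : ℝ, 0 ≤ α →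
      ¬ ∃ V : EuclideanSpace ℝ (Fin p), memR p V ∧ gradient (FFa m χ α p) V = 0 := by
    rintro α hα ⟨V, hV, hgrad⟩
    set S : Set ℝ := {r : ℝ | ∃ X : EuclideanSpace ℝ (Fin p), memR p X ∧
      r = pairSum m p X / gapSum m p X} with hS
    have hbound : ∀ r ∈ S, r ≤ 1 / χ := by
      rintro r ⟨X, hX, rfl⟩
      have hk := Stmt10Aux.key hm hχ hα hV hgrad hX
      have hgap : 0 < gapSum m p X := Stmt10Aux.gapSum_pos hp hX.1
      rw [div_le_div_iff₀ hgap hχ]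
      linarith
    -- a positive element of S
    set c : ℝ := (∑ i : Fin p, ((i : ℕ) : ℝ)) / p with hc
    set X0 : EuclideanSpace ℝ (Fin p) := WithLp.toLp 2 (fun i : Fin p => ((i : ℕ) : ℝ) - c) with hX0def
    have hX0ap : ∀ i : Fin p, X0 i = ((i : ℕ) : ℝ) - c := fun i => rfl
    have hX0mono : StrictMono fun i : Fin p => X0 i := by
      intro a b hab
      have h := Nat.cast_lt (α := ℝ) |>.mpr hab
      show X0 a < X0 b
      rw [hX0ap, hX0ap]
      linarith
    have hp0 : (p : ℝ) ≠ 0 := Nat.cast_ne_zero.mpr (by omega)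
    have hX0sum : ∑ i, X0 i = 0 := by
      rw [Finset.sum_congr rfl fun i _ => hX0ap i, Finset.sum_sub_distrib,
        Finset.sum_const, Finset.card_univ, Fintype.card_fin, nsmul_eq_mul, hc]
      field_simp
      ring
    have hX0mem : memR p X0 := ⟨hX0mono, hX0sum⟩
    have hgap0 : 0 < gapSum m p X0 := Stmt10Aux.gapSum_pos hp hX0mono
    have hpair0 : 0 < pairSum m p X0 := Stmt10Aux.pairSum_pos hp hX0mono
    have hr0pos : 0 < pairSum m p X0 / gapSum m p X0 := div_pos hpair0 hgap0
    have hmem : pairSum m p X0 / gapSum m p X0 ∈ S := ⟨X0, hX0mem, rfl⟩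
    have hbdd : BddAbove S := ⟨1 / χ, hbound⟩
    have h1 : sSup S ≤ 1 / χ := Real.sSup_le hbound (by positivity)
    have h2 : pairSum m p X0 / gapSum m p X0 ≤ sSup S := le_csSup hbdd hmem
    have hSpos : 0 < sSup S := lt_of_lt_of_le hr0pos h2
    have hCp : Cp m p = (sSup S)⁻¹ := rfl
    have hχle : χ ≤ Cp m p := by
      rw [hCp, ← one_div, le_div_iff₀ hSpos]
      calc χ * sSup S ≤ χ * (1 / χ) := mul_le_mul_of_nonneg_left h1 hχ.le
        _ = 1 := by field_simp
    linarith
  refine ⟨main, ?_⟩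
  have hFF0 : FFa m χ 0 p = FF m χ p := by
    funext Y
    simp [FFa]
  rintro ⟨V, hV, hgrad⟩
  exact main 0 le_rfl ⟨V, hV, by rw [hFF0]; exact hgrad⟩
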